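/- arXiv:2301.08017 — 2 statements merged into one kernel-verified Lean document; each statement's English description precedes it below -/
import Mathlib

section
/- (Taylor's fatness lemma.) Let k ∈ ℕ with k ≥ 1 and let Ω ⊆ ℝ² be an open set, multiply connected of order k, with finite inradius r_Ω. Let 𝒬 be an open square with side length 10(⌊√k⌋+1)·r_Ω whose sides are parallel to the coordinate axes. Then there exists a compact set Σ ⊆ closure(𝒬) \ Ω such that max{ ℋ¹(Π_{e₁}(Σ)), ℋ¹(Π_{e₂}(Σ)) } ≥ (√k/4)·r_Ω, where ℋ¹ is the 1-dimensional Hausdorff measure. -/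
open MeasureTheory Metric Filter
open scoped ENNReal Topology

noncomputable section

/-- The plane `ℝ²`. -/
abbrev Plane := EuclideanSpace ℝ (Fin 2)

/-- The set of radii of open disks contained in `Ω`. -/
def inradiusSet (Ω : Set Plane) : Set ℝ :=
  { r | 0 < r ∧ ∃ x₀ ∈ Ω, ball x₀ r ⊆ Ω }

/-- The inradius `r_Ω`. -/
noncomputable def inradius (Ω : Set Plane) : ℝ := sSup (inradiusSet Ω)

/-- `Ω` is an open connected set whose complement in the one-point compactification of `ℝ²`
has exactly `k` connected components. -/
def MultiplyConnected (Ω : Set Plane) (k : ℕ) : Prop :=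
  IsOpen Ω ∧ IsConnected Ω ∧
  Nat.card (ConnectedComponents
    (↥((((fun x : Plane => (x : OnePoint Plane)) '' Ω))ᶜ))) = k

/-- The open axis-parallel square of center `c` and side length `L`. -/
def openSquare (c : Plane) (L : ℝ) : Set Plane :=
  { x : Plane | |x 0 - c 0| < L / 2 ∧ |x 1 - c 1| < L / 2 }

/-- Orthogonal projection `Π_{e₁}(x₁,x₂) = (0,x₂)`. -/
def projE1 (x : Plane) : Plane := WithLp.toLp 2 (![0, x 1] : Fin 2 → ℝ)

/-- Orthogonal projection `Π_{e₂}(x₁,x₂) = (x₁,0)`. -/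
def projE2 (x : Plane) : Plane := WithLp.toLp 2 (![x 0, 0] : Fin 2 → ℝ)

namespace TF

open Set

lemma abs_coord_le (x y : Plane) (i : Fin 2) : |x i - y i| ≤ dist x y := by
  rw [EuclideanSpace.dist_eq, ← Real.sqrt_sq_eq_abs]
  apply Real.sqrt_le_sqrt
  have := Finset.single_le_sum (f := fun j => dist (x j) (y j) ^ 2)
    (fun j _ => sq_nonneg _) (Finset.mem_univ i)
  simpa [Real.dist_eq] using this

lemma dist_le_coords (x y : Plane) : dist x y ≤ |x 0 - y 0| + |x 1 - y 1| := by
  rw [EuclideanSpace.dist_eq]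
  rw [show (Finset.univ : Finset (Fin 2)) = {0, 1} by decide]
  rw [Finset.sum_insert (by decide), Finset.sum_singleton]
  simp only [Real.dist_eq]
  set A := x 0 - y 0
  set B := x 1 - y 1
  refine (Real.sqrt_le_sqrt (by nlinarith [abs_nonneg A, abs_nonneg B, sq_abs A, sq_abs B] :
    |A|^2 + |B|^2 ≤ (|A|+|B|)^2)).trans ?_
  rw [Real.sqrt_sq (by positivity)]

lemma continuous_coord (i : Fin 2) : Continuous (fun x : Plane => x i) :=
  (LipschitzWith.of_dist_le_mul (fun x y => by
    simpa [Real.dist_eq] using abs_coord_le x y i)).continuous (K := 1)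

def mk2 (u v : ℝ) : Plane := WithLp.toLp 2 ![u, v]
@[simp] lemma mk2_zero (u v : ℝ) : mk2 u v 0 = u := rfl
@[simp] lemma mk2_one (u v : ℝ) : mk2 u v 1 = v := rfl

lemma isometry_mk2_fst : Isometry (fun t : ℝ => mk2 t 0) := by
  apply Isometry.of_dist_eq
  intro a b
  rw [EuclideanSpace.dist_eq]
  rw [show (Finset.univ : Finset (Fin 2)) = {0, 1} by decide]
  rw [Finset.sum_insert (by decide), Finset.sum_singleton]
  simp [Real.dist_eq, Real.sqrt_sq_eq_abs]

lemma isometry_mk2_snd : Isometry (fun t : ℝ => mk2 0 t) := by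
  apply Isometry.of_dist_eq
  intro a b
  rw [EuclideanSpace.dist_eq]
  rw [show (Finset.univ : Finset (Fin 2)) = {0, 1} by decide]
  rw [Finset.sum_insert (by decide), Finset.sum_singleton]
  simp [Real.dist_eq, Real.sqrt_sq_eq_abs]

lemma haus_projE2 (S : Set Plane) :
    μH[1] (projE2 '' S) = volume ((fun z : Plane => z 0) '' S) := by
  have h1 : projE2 '' S = (fun t : ℝ => mk2 t 0) '' ((fun z : Plane => z 0) '' S) := by
    rw [Set.image_image]; rfl
  rw [h1, isometry_mk2_fst.hausdorffMeasure_image (Or.inl one_pos.le),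
    MeasureTheory.hausdorffMeasure_real]

lemma haus_projE1 (S : Set Plane) :
    μH[1] (projE1 '' S) = volume ((fun z : Plane => z 1) '' S) := by
  have h1 : projE1 '' S = (fun t : ℝ => mk2 0 t) '' ((fun z : Plane => z 1) '' S) := by
    rw [Set.image_image]; rfl
  rw [h1, isometry_mk2_snd.hausdorffMeasure_image (Or.inl one_pos.le),
    MeasureTheory.hausdorffMeasure_real]

def Rect (xl xr yb yt : ℝ) : Set Plane :=
  {x : Plane | xl ≤ x 0 ∧ x 0 ≤ xr ∧ yb ≤ x 1 ∧ x 1 ≤ yt}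
def Recto (xl xr yb yt : ℝ) : Set Plane :=
  {x : Plane | xl < x 0 ∧ x 0 < xr ∧ yb < x 1 ∧ x 1 < yt}

lemma isClosed_rect (xl xr yb yt : ℝ) : IsClosed (Rect xl xr yb yt) := by
  have : Rect xl xr yb yt =
      ((fun x : Plane => x 0) ⁻¹' (Icc xl xr)) ∩ ((fun x : Plane => x 1) ⁻¹' (Icc yb yt)) := by
    ext x; simp [Rect, and_assoc]
  rw [this]
  exact (isClosed_Icc.preimage (continuous_coord 0)).inter
    (isClosed_Icc.preimage (continuous_coord 1))

lemma isOpen_recto (xl xr yb yt : ℝ) : IsOpen (Recto xl xr yb yt) := by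
  have : Recto xl xr yb yt =
      ((fun x : Plane => x 0) ⁻¹' (Ioo xl xr)) ∩ ((fun x : Plane => x 1) ⁻¹' (Ioo yb yt)) := by
    ext x; simp [Recto, and_assoc]
  rw [this]
  exact (isOpen_Ioo.preimage (continuous_coord 0)).inter
    (isOpen_Ioo.preimage (continuous_coord 1))

lemma isCompact_rect (xl xr yb yt : ℝ) : IsCompact (Rect xl xr yb yt) := by
  apply IsCompact.of_isClosed_subset
    (isCompact_closedBall (mk2 xl yb) ((xr - xl) + (yt - yb)))
    (isClosed_rect _ _ _ _)
  intro x hx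
  obtain ⟨h1, h2, h3, h4⟩ := hx
  rw [mem_closedBall]
  refine (dist_le_coords x (mk2 xl yb)).trans ?_
  simp only [mk2_zero, mk2_one]
  rw [abs_of_nonneg (by linarith), abs_of_nonneg (by linarith)]
  linarith

lemma closure_openSquare (c : Plane) {L : ℝ} (hL : 0 < L) :
    closure (openSquare c L) = Rect (c 0 - L/2) (c 0 + L/2) (c 1 - L/2) (c 1 + L/2) := by
  apply Subset.antisymm
  · apply closure_minimal
    · intro x hx
      obtain ⟨h1, h2⟩ := hx
      rw [abs_lt] at h1 h2
      exact ⟨by linarith [h1.1], by linarith [h1.2], by linarith [h2.1], by linarith [h2.2]⟩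
    · exact isClosed_rect _ _ _ _
  · intro x hx
    obtain ⟨hx0a, hx0b, hx1a, hx1b⟩ := hx
    have hx0 : |x 0 - c 0| ≤ L / 2 := abs_le.2 ⟨by linarith, by linarith⟩
    have hx1 : |x 1 - c 1| ≤ L / 2 := abs_le.2 ⟨by linarith, by linarith⟩
    rw [Metric.mem_closure_iff]
    intro ε hε
    set δ : ℝ := min 1 (ε / (L + 1)) with hδdef
    have hδ0 : 0 < δ := lt_min one_pos (by positivity)
    have hδ1 : δ ≤ 1 := min_le_left _ _
    refine ⟨c + (1 - δ) • (x - c), ?_, ?_⟩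
    · constructor
      · have : (c + (1 - δ) • (x - c)) 0 - c 0 = (1 - δ) * (x 0 - c 0) := by
          simp only [PiLp.add_apply, PiLp.smul_apply, PiLp.sub_apply, smul_eq_mul]; ring
        rw [this, abs_mul, abs_of_nonneg (by linarith)]
        calc (1 - δ) * |x 0 - c 0| ≤ (1 - δ) * (L / 2) := by
              apply mul_le_mul_of_nonneg_left hx0 (by linarith)
          _ < L / 2 := by nlinarith
      · have : (c + (1 - δ) • (x - c)) 1 - c 1 = (1 - δ) * (x 1 - c 1) := by
          simp only [PiLp.add_apply, PiLp.smul_apply, PiLp.sub_apply, smul_eq_mul]; ring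
        rw [this, abs_mul, abs_of_nonneg (by linarith)]
        calc (1 - δ) * |x 1 - c 1| ≤ (1 - δ) * (L / 2) := by
              apply mul_le_mul_of_nonneg_left hx1 (by linarith)
          _ < L / 2 := by nlinarith
    · have hxy : x - (c + (1 - δ) • (x - c)) = δ • (x - c) := by
        module
      rw [dist_eq_norm, hxy, norm_smul]
      have hnorm : ‖x - c‖ ≤ L := by
        have := dist_le_coords x c
        rw [dist_eq_norm] at this
        have e0 : (x - c) 0 = x 0 - c 0 := by simp [PiLp.sub_apply]
        have e1 : (x - c) 1 = x 1 - c 1 := by simp [PiLp.sub_apply]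
        linarith [this]
      have hnd : ‖δ‖ = δ := by rw [Real.norm_eq_abs, abs_of_pos hδ0]
      rw [hnd]
      have hδε : δ ≤ ε / (L + 1) := min_le_right _ _
      calc δ * ‖x - c‖ ≤ (ε / (L + 1)) * L := by
            apply mul_le_mul hδε hnorm (norm_nonneg _) (by positivity)
        _ < ε := by
            rw [div_mul_eq_mul_div, div_lt_iff₀ (by linarith)]
            nlinarith

def Cset (Ω : Set Plane) : Set (OnePoint Plane) :=
  (((fun x : Plane => (x : OnePoint Plane)) '' Ω))ᶜ

lemma mem_Cset {Ω : Set Plane} {q : Plane} (hq : q ∉ Ω) : (q : OnePoint Plane) ∈ Cset Ω := by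
  intro hmem
  obtain ⟨w, hw, hwe⟩ := hmem
  exact hq (OnePoint.coe_injective hwe ▸ hw)

lemma infty_mem_Cset (Ω : Set Plane) : (OnePoint.infty : OnePoint Plane) ∈ Cset Ω := by
  intro hmem
  obtain ⟨w, _, hwe⟩ := hmem
  exact (OnePoint.coe_ne_infty w) hwe

/-- Core trapping lemma. -/
lemma trap (Ω : Set Plane) (xl xr yb yt : ℝ)
    (hfr : ∀ z : Plane, z ∈ Rect xl xr yb yt → z ∉ Recto xl xr yb yt → z ∈ Ω)
    (q : Plane) (hq : q ∉ Ω) (hqin : q ∈ Recto xl xr yb yt)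
    (z : OnePoint Plane) (hz : z ∈ connectedComponentIn (Cset Ω) (q : OnePoint Plane)) :
    ∃ w : Plane, z = (w : OnePoint Plane) ∧ w ∈ Recto xl xr yb yt := by
  haveI : LocallyCompactSpace Plane := inferInstance
  haveI : NormalSpace (OnePoint Plane) := inferInstance
  haveI : T4Space (OnePoint Plane) := ⟨⟩
  set U : Set (OnePoint Plane) := (fun x : Plane => (x : OnePoint Plane)) '' Recto xl xr yb yt
    with hU
  set V : Set (OnePoint Plane) :=
    ((fun x : Plane => (x : OnePoint Plane)) '' Rect xl xr yb yt)ᶜ with hV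
  have hUopen : IsOpen U := OnePoint.isOpen_image_coe.2 (isOpen_recto _ _ _ _)
  have hVopen : IsOpen V :=
    (((isCompact_rect xl xr yb yt).image OnePoint.continuous_coe).isClosed).isOpen_compl
  have hdisj : Disjoint U V := by
    rw [Set.disjoint_iff]
    rintro w ⟨hw1, hw2⟩
    refine hw2 (Set.image_mono ?_ hw1)
    intro x hx
    exact ⟨hx.1.le, hx.2.1.le, hx.2.2.1.le, hx.2.2.2.le⟩
  have hsub : Cset Ω ⊆ U ∪ V := by
    rintro w hw
    rcases w with _ | x
    · right
      intro hmem
      obtain ⟨v, _, hve⟩ := hmem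
      exact (OnePoint.coe_ne_infty v) hve
    · by_cases hxK : x ∈ Rect xl xr yb yt
      · by_cases hxo : x ∈ Recto xl xr yb yt
        · exact Or.inl ⟨x, hxo, rfl⟩
        · exact absurd (Set.mem_image_of_mem _ (hfr x hxK hxo)) hw
      · right
        intro hmem
        obtain ⟨v, hv, hve⟩ := hmem
        exact hxK (OnePoint.coe_injective hve ▸ hv)
  have hcomp : connectedComponentIn (Cset Ω) (q : OnePoint Plane) ⊆ U := by
    apply IsPreconnected.subset_left_of_subset_union hUopen hVopen hdisj
      ((connectedComponentIn_subset _ _).trans hsub)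
      ⟨(q : OnePoint Plane), mem_connectedComponentIn (mem_Cset hq), ⟨q, hqin, rfl⟩⟩
      isPreconnected_connectedComponentIn
  obtain ⟨w, hw, hwe⟩ := hcomp hz
  exact ⟨w, hwe.symm, hw⟩

lemma comp_mem {Ω : Set Plane} {q q' : Plane} (hq : q ∉ Ω) (hq' : q' ∉ Ω)
    (h : (ConnectedComponents.mk (⟨(q' : OnePoint Plane), mem_Cset hq'⟩ : ↥(Cset Ω))) =
         ConnectedComponents.mk (⟨(q : OnePoint Plane), mem_Cset hq⟩ : ↥(Cset Ω))) :
    (q' : OnePoint Plane) ∈ connectedComponentIn (Cset Ω) (q : OnePoint Plane) := by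
  rw [connectedComponentIn_eq_image (mem_Cset hq)]
  have := ConnectedComponents.coe_eq_coe' (α := ↥(Cset Ω)).1 h
  exact ⟨_, this, rfl⟩

lemma comp_mem_infty {Ω : Set Plane} {q : Plane} (hq : q ∉ Ω)
    (h : (ConnectedComponents.mk (⟨(OnePoint.infty : OnePoint Plane), infty_mem_Cset Ω⟩ : ↥(Cset Ω))) =
         ConnectedComponents.mk (⟨(q : OnePoint Plane), mem_Cset hq⟩ : ↥(Cset Ω))) :
    (OnePoint.infty : OnePoint Plane) ∈ connectedComponentIn (Cset Ω) (q : OnePoint Plane) := by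
  rw [connectedComponentIn_eq_image (mem_Cset hq)]
  have := ConnectedComponents.coe_eq_coe' (α := ↥(Cset Ω)).1 h
  exact ⟨_, this, rfl⟩

lemma nat_ivt {f : ℕ → ℕ} (h0 : f 0 = 0) (hstep : ∀ s, f (s + 1) ≤ f s + 1) :
    ∀ N i, i ≤ f N → ∃ s, s ≤ N ∧ f s = i := by
  intro N
  induction N with
  | zero => intro i hi; exact ⟨0, le_refl 0, by omega⟩
  | succ N ih =>
    intro i hi
    by_cases h : i ≤ f N
    · obtain ⟨s, hs, hfs⟩ := ih i h
      exact ⟨s, hs.trans (Nat.le_succ N), hfs⟩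
    · have : i = f (N + 1) := by have := hstep N; omega
      exact ⟨N + 1, le_refl _, this.symm⟩

lemma card_nonsep {X : Set ℝ} {a r W : ℝ} (hr : 0 < r)
    (hvol : volume X < ENNReal.ofReal W) (N : ℕ)
    (P : ℕ → Prop) [DecidablePred P]
    (hP : ∀ j, ¬ P j → Icc (a + 4*r*j + 3*r/2) (a + 4*r*j + 5*r/2) ⊆ X) :
    (((Finset.range N).filter (fun j => ¬ P j)).card : ℝ) * r < W := by
  classical
  set Bad := (Finset.range N).filter (fun j => ¬ P j) with hBad
  have hdisj : (Bad : Set ℕ).PairwiseDisjoint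
      (fun j : ℕ => Icc (a + 4*r*(j:ℝ) + 3*r/2) (a + 4*r*j + 5*r/2)) := by
    intro i _ j _ hij
    apply Set.disjoint_left.2
    intro x hx hx'
    simp only [mem_Icc] at hx hx'
    rcases lt_or_gt_of_ne hij with h | h
    · have hc : (i:ℝ) + 1 ≤ (j:ℝ) := by exact_mod_cast h
      nlinarith [hx.2, hx'.1]
    · have hc : (j:ℝ) + 1 ≤ (i:ℝ) := by exact_mod_cast h
      nlinarith [hx.1, hx'.2]
  have hUnion : (⋃ j ∈ Bad, Icc (a + 4*r*(j:ℝ) + 3*r/2) (a + 4*r*j + 5*r/2)) ⊆ X := by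
    apply Set.iUnion₂_subset
    intro j hj
    apply hP
    simpa [hBad] using (Finset.mem_filter.1 hj).2
  have hmeas := measure_biUnion_finset (μ := volume) hdisj
    (f := fun j : ℕ => Icc (a + 4*r*(j:ℝ) + 3*r/2) (a + 4*r*j + 5*r/2))
    (fun j _ => measurableSet_Icc)
  have hsum : ∑ j ∈ Bad, volume (Icc (a + 4*r*(j:ℝ) + 3*r/2) (a + 4*r*j + 5*r/2))
      = Bad.card * ENNReal.ofReal r := by
    have : ∀ j ∈ Bad, volume (Icc (a + 4*r*(j:ℝ) + 3*r/2) (a + 4*r*j + 5*r/2))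
        = ENNReal.ofReal r := by
      intro j _
      rw [Real.volume_Icc]
      congr 1
      ring
    rw [Finset.sum_congr rfl this, Finset.sum_const, nsmul_eq_mul]
  have hle : (Bad.card : ℝ≥0∞) * ENNReal.ofReal r < ENNReal.ofReal W := by
    calc (Bad.card : ℝ≥0∞) * ENNReal.ofReal r = ∑ j ∈ Bad, volume
          (Icc (a + 4*r*(j:ℝ) + 3*r/2) (a + 4*r*j + 5*r/2)) := hsum.symm
      _ = volume (⋃ j ∈ Bad, Icc (a + 4*r*(j:ℝ) + 3*r/2) (a + 4*r*j + 5*r/2)) := hmeas.symm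
      _ ≤ volume X := measure_mono hUnion
      _ < ENNReal.ofReal W := hvol
  have h2 : ENNReal.ofReal ((Bad.card : ℝ) * r) < ENNReal.ofReal W := by
    rw [ENNReal.ofReal_mul (by positivity)]
    simpa [ENNReal.ofReal_natCast] using hle
  exact (ENNReal.ofReal_lt_ofReal_iff_of_nonneg (by positivity)).1 h2

end TF

set_option maxHeartbeats 2000000 in
/-- Taylor's fatness lemma: if `Ω ⊆ ℝ²` is multiply connected of order `k` with finite inradius
and `𝒬` is an open axis-parallel square of side length `10(⌊√k⌋+1) r_Ω`, then there is a compact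
set `Σ ⊆ closure 𝒬 \ Ω` whose projection on one of the coordinate axes has `ℋ¹`-measure at least
`(√k/4) r_Ω`. -/
theorem taylor_fatness (k : ℕ) (hk : 1 ≤ k) (Ω : Set Plane)
    (hΩ : MultiplyConnected Ω k) (hfin : BddAbove (inradiusSet Ω))
    (c : Plane) :
    ∃ S : Set Plane, IsCompact S ∧
      S ⊆ closure (openSquare c (10 * ((⌊Real.sqrt k⌋₊ : ℝ) + 1) * inradius Ω)) \ Ω ∧
      ENNReal.ofReal (Real.sqrt k / 4 * inradius Ω) ≤
        max (μH[1] (projE1 '' S)) (μH[1] (projE2 '' S)) := by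
  classical
  obtain ⟨hΩopen, hΩconn, hcard⟩ := hΩ
  by_contra hcon
  push_neg at hcon
  set r := inradius Ω with hrdef
  have hrpos : 0 < r := by
    obtain ⟨x, hx⟩ := hΩconn.nonempty
    obtain ⟨ε, hε, hball⟩ := Metric.isOpen_iff.1 hΩopen x hx
    have hmem : ε ∈ inradiusSet Ω := ⟨hε, x, hx, hball⟩
    exact hε.trans_le (le_csSup hfin hmem)
  have hdense : ∀ p : Plane, ∃ z : Plane, z ∉ Ω ∧ dist z p < 3*r/2 := by
    intro p
    by_contra hc
    push_neg at hc
    have hball : ball p (3*r/2) ⊆ Ω := by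
      intro z hz
      by_contra hzΩ
      exact absurd (mem_ball.1 hz) (not_lt.2 (hc z hzΩ))
    have hmem : (3*r/2) ∈ inradiusSet Ω :=
      ⟨by linarith, p, hball (mem_ball_self (by linarith)), hball⟩
    have h2 : 3 * r / 2 ≤ r := le_csSup hfin hmem
    linarith
  set m := Nat.floor (Real.sqrt (k:ℝ)) with hmdef
  have hsqrt_lt : Real.sqrt (k:ℝ) < (m:ℝ) + 1 := Nat.lt_floor_add_one _
  have hsqrt_nonneg : (0:ℝ) ≤ Real.sqrt (k:ℝ) := Real.sqrt_nonneg _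
  set L := 10 * ((m:ℝ) + 1) * r with hLdef
  have hL : 0 < L := by positivity
  set W := Real.sqrt (k:ℝ) / 4 * r with hWdef
  have hW0 : 0 ≤ W := by positivity
  have hWm : W ≤ ((m:ℝ)+1)/4 * r := by
    rw [hWdef]
    apply mul_le_mul_of_nonneg_right _ hrpos.le
    linarith
  -- the compact set F
  set F := TF.Rect (c 0 - L/2) (c 0 + L/2) (c 1 - L/2) (c 1 + L/2) \ Ω with hFdef
  have hFclosed : IsClosed F := (TF.isClosed_rect _ _ _ _).sdiff hΩopen
  have hFcompact : IsCompact F :=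
    (TF.isCompact_rect (c 0 - L/2) (c 0 + L/2) (c 1 - L/2) (c 1 + L/2)).of_isClosed_subset
      hFclosed Set.diff_subset
  have hFsub : F ⊆ closure (openSquare c L) \ Ω := by
    rw [TF.closure_openSquare c hL]
  have hmaxF := hcon F hFcompact hFsub
  set X := (fun z : Plane => z 0) '' F with hXdef
  set Y := (fun z : Plane => z 1) '' F with hYdef
  have hX : volume X < ENNReal.ofReal W := by
    rw [hXdef, ← TF.haus_projE2]
    exact (le_max_right _ _).trans_lt hmaxF
  have hY : volume Y < ENNReal.ofReal W := by
    rw [hYdef, ← TF.haus_projE1]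
    exact (le_max_left _ _).trans_lt hmaxF
  -- free coordinates
  have hfreegen : ∀ (Z : Set ℝ), volume Z < ENNReal.ofReal W →
      ∀ u : ℝ, ∃ x, x ∈ Set.Icc u (u + (W + r)) ∧ x ∉ Z := by
    intro Z hZ u
    by_contra hc
    push_neg at hc
    have hsub : Set.Icc u (u + (W + r)) ⊆ Z := fun x hx => hc x hx
    have h1 : ENNReal.ofReal (W + r) ≤ volume Z := by
      have := measure_mono (μ := volume) hsub
      rwa [Real.volume_Icc, add_sub_cancel_left] at this
    have h2 : ENNReal.ofReal (W + r) < ENNReal.ofReal W := h1.trans_lt hZ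
    rw [ENNReal.ofReal_lt_ofReal_iff_of_nonneg (by linarith)] at h2
    linarith
  -- grid setup
  set n := m + 1 + (m + 4)/4 with hndef
  have hn1 : 1 ≤ n := by omega
  have hcast4 : (((m + 4)/4 : ℕ) : ℝ) ≤ ((m:ℝ) + 4)/4 := by
    have := Nat.cast_div_le (m := m + 4) (n := 4) (α := ℝ)
    push_cast at this
    convert this using 2 <;> norm_num
  have hncast : ((n:ℝ)) - 1 ≤ (m:ℝ) + ((m:ℝ)+4)/4 := by
    rw [hndef]
    push_cast
    linarith [hcast4]
  set a := c 0 - L/2 + (W + 5*r/2) with hadef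
  set b := c 1 - L/2 + (W + 5*r/2) with hbdef
  -- master margin inequality
  have hmn : 4*r*((n:ℝ)-1) ≤ 5*(r*(m:ℝ)) + 4*r := by
    have h1 : 4*r*((n:ℝ)-1) ≤ 4*r*((m:ℝ) + ((m:ℝ)+4)/4) :=
      mul_le_mul_of_nonneg_left hncast (by positivity)
    nlinarith [h1]
  have hrm : (0:ℝ) ≤ r * (m:ℝ) := mul_nonneg hrpos.le (Nat.cast_nonneg m)
  have hWm' : 2*W ≤ (r*(m:ℝ) + r)/2 := by nlinarith [hWm]
  have hLval : L = 10*(r*(m:ℝ)) + 10*r := by rw [hLdef]; ring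
  have hmargin : a + 4*r*((n:ℝ) - 1) + 3*r/2 + (W + r) ≤ c 0 + L/2 := by
    rw [hadef]
    linarith [hmn, hWm', hrm, hrpos, hLval]
  have hmarginy : b + 4*r*((n:ℝ) - 1) + 3*r/2 + (W + r) ≤ c 1 + L/2 := by
    rw [hbdef]
    linarith [hmn, hWm', hrm, hrpos, hLval]
  -- the grid points of the complement
  have hqex : ∀ s t : ℕ, ∃ z : Plane, z ∉ Ω ∧
      |z 0 - (a + 4*r*s)| < 3*r/2 ∧ |z 1 - (b + 4*r*t)| < 3*r/2 := by
    intro s t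
    obtain ⟨z, hz1, hz2⟩ := hdense (TF.mk2 (a + 4*r*s) (b + 4*r*t))
    refine ⟨z, hz1, ?_, ?_⟩
    · have h0 := TF.abs_coord_le z (TF.mk2 (a + 4*r*s) (b + 4*r*t)) 0
      rw [TF.mk2_zero] at h0
      linarith
    · have h1 := TF.abs_coord_le z (TF.mk2 (a + 4*r*s) (b + 4*r*t)) 1
      rw [TF.mk2_one] at h1
      linarith
  choose Q hQΩ hQ0 hQ1 using hqex
  -- basic coordinate bounds for the grid points
  have hsle : ∀ s : ℕ, s < n → (s:ℝ) ≤ (n:ℝ) - 1 := by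
    intro s hs
    have : (s:ℝ) + 1 ≤ (n:ℝ) := by exact_mod_cast hs
    linarith
  have hQ0lb : ∀ s t : ℕ, a + 4*r*s - 3*r/2 < Q s t 0 := by
    intro s t
    have := abs_lt.1 (hQ0 s t)
    linarith [this.1]
  have hQ0ub : ∀ s t : ℕ, Q s t 0 < a + 4*r*s + 3*r/2 := by
    intro s t
    have := abs_lt.1 (hQ0 s t)
    linarith [this.2]
  have hQ1lb : ∀ s t : ℕ, b + 4*r*t - 3*r/2 < Q s t 1 := by
    intro s t
    have := abs_lt.1 (hQ1 s t)
    linarith [this.1]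
  have hQ1ub : ∀ s t : ℕ, Q s t 1 < b + 4*r*t + 3*r/2 := by
    intro s t
    have := abs_lt.1 (hQ1 s t)
    linarith [this.2]
  have hrs_nonneg : ∀ s : ℕ, (0:ℝ) ≤ 4*r*s := by
    intro s
    positivity
  -- the grid points are in F
  have hQF : ∀ s t : ℕ, s < n → t < n → Q s t ∈ F := by
    intro s t hs ht
    refine ⟨⟨?_, ?_, ?_, ?_⟩, hQΩ s t⟩
    · linarith [hQ0lb s t, hrs_nonneg s, hW0, hrpos]
    · have h2 : 4*r*(s:ℝ) ≤ 4*r*((n:ℝ)-1) :=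
        mul_le_mul_of_nonneg_left (hsle s hs) (by positivity)
      linarith [hQ0ub s t, h2, hmargin, hrpos, hW0]
    · linarith [hQ1lb s t, hrs_nonneg t, hW0, hrpos]
    · have h2 : 4*r*(t:ℝ) ≤ 4*r*((n:ℝ)-1) :=
        mul_le_mul_of_nonneg_left (hsle t ht) (by positivity)
      linarith [hQ1ub s t, h2, hmarginy, hrpos, hW0]
  -- global free lines
  obtain ⟨xl, hxlIcc, hxlX⟩ := hfreegen X hX (c 0 - L/2)
  obtain ⟨xr, hxrIcc, hxrX⟩ := hfreegen X hX (a + 4*r*((n:ℝ) - 1) + 3*r/2)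
  obtain ⟨yb, hybIcc, hybY⟩ := hfreegen Y hY (c 1 - L/2)
  obtain ⟨yt, hytIcc, hytY⟩ := hfreegen Y hY (b + 4*r*((n:ℝ) - 1) + 3*r/2)
  -- bounds for the free lines
  have hxl1 : c 0 - L/2 ≤ xl := hxlIcc.1
  have hxl2 : xl ≤ a - 3*r/2 := by
    have := hxlIcc.2
    rw [hadef]
    linarith
  have hxr1 : a + 4*r*((n:ℝ) - 1) + 3*r/2 ≤ xr := hxrIcc.1
  have hxr2 : xr ≤ c 0 + L/2 := hxrIcc.2.trans hmargin
  have hyb1 : c 1 - L/2 ≤ yb := hybIcc.1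
  have hyb2 : yb ≤ b - 3*r/2 := by
    have := hybIcc.2
    rw [hbdef]
    linarith
  have hyt1 : b + 4*r*((n:ℝ) - 1) + 3*r/2 ≤ yt := hytIcc.1
  have hyt2 : yt ≤ c 1 + L/2 := hytIcc.2.trans hmarginy
  -- grid points lie strictly between the global free lines
  have hQxl : ∀ s t : ℕ, xl < Q s t 0 := by
    intro s t
    have := hQ0lb s t
    have h2 := hrs_nonneg s
    linarith
  have hQxr : ∀ s t : ℕ, s < n → Q s t 0 < xr := by
    intro s t hs
    have := hQ0ub s t
    have h2 : 4*r*(s:ℝ) ≤ 4*r*((n:ℝ)-1) :=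
      mul_le_mul_of_nonneg_left (hsle s hs) (by positivity)
    linarith
  have hQyb : ∀ s t : ℕ, yb < Q s t 1 := by
    intro s t
    have := hQ1lb s t
    have h2 := hrs_nonneg t
    linarith
  have hQyt : ∀ s t : ℕ, t < n → Q s t 1 < yt := by
    intro s t ht
    have := hQ1ub s t
    have h2 : 4*r*(t:ℝ) ≤ 4*r*((n:ℝ)-1) :=
      mul_le_mul_of_nonneg_left (hsle t ht) (by positivity)
    linarith
  -- separators
  set sepx : ℕ → Prop := fun j => ∃ x, x ∈ Set.Icc (a + 4*r*j + 3*r/2) (a + 4*r*j + 5*r/2) ∧ x ∉ X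
    with hsepxdef
  set sepy : ℕ → Prop := fun j => ∃ y, y ∈ Set.Icc (b + 4*r*j + 3*r/2) (b + 4*r*j + 5*r/2) ∧ y ∉ Y
    with hsepydef
  set clsx : ℕ → ℕ := fun s => ((Finset.range s).filter (fun j => sepx j)).card with hclsxdef
  set clsy : ℕ → ℕ := fun s => ((Finset.range s).filter (fun j => sepy j)).card with hclsydef
  have hcls0x : clsx 0 = 0 := by simp [hclsxdef]
  have hcls0y : clsy 0 = 0 := by simp [hclsydef]
  have hstepx : ∀ s, clsx (s+1) ≤ clsx s + 1 := by
    intro s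
    rw [hclsxdef]
    simp only [Finset.range_add_one, Finset.filter_insert]
    split_ifs
    · exact Finset.card_insert_le _ _
    · exact Nat.le_succ _
  have hstepy : ∀ s, clsy (s+1) ≤ clsy s + 1 := by
    intro s
    rw [hclsydef]
    simp only [Finset.range_add_one, Finset.filter_insert]
    split_ifs
    · exact Finset.card_insert_le _ _
    · exact Nat.le_succ _
  -- between distinct classes there is a separator
  have hgapx : ∀ s s' : ℕ, clsx s < clsx s' → ∃ j, s ≤ j ∧ j < s' ∧ sepx j := by
    intro s s' hlt
    have hns : ¬ ((Finset.range s').filter (fun j => sepx j) ⊆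
        (Finset.range s).filter (fun j => sepx j)) := by
      intro hsub
      exact absurd (Finset.card_le_card hsub) (not_le.2 hlt)
    obtain ⟨j, hj1, hj2⟩ := Finset.not_subset.1 hns
    rw [Finset.mem_filter, Finset.mem_range] at hj1
    refine ⟨j, ?_, hj1.1, hj1.2⟩
    by_contra hjs
    exact hj2 (Finset.mem_filter.2 ⟨Finset.mem_range.2 (not_le.1 hjs), hj1.2⟩)
  have hgapy : ∀ s s' : ℕ, clsy s < clsy s' → ∃ j, s ≤ j ∧ j < s' ∧ sepy j := by
    intro s s' hlt
    have hns : ¬ ((Finset.range s').filter (fun j => sepy j) ⊆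
        (Finset.range s).filter (fun j => sepy j)) := by
      intro hsub
      exact absurd (Finset.card_le_card hsub) (not_le.2 hlt)
    obtain ⟨j, hj1, hj2⟩ := Finset.not_subset.1 hns
    rw [Finset.mem_filter, Finset.mem_range] at hj1
    refine ⟨j, ?_, hj1.1, hj1.2⟩
    by_contra hjs
    exact hj2 (Finset.mem_filter.2 ⟨Finset.mem_range.2 (not_le.1 hjs), hj1.2⟩)
  -- lower bound on the number of separators
  have hbadx : (((Finset.range (n-1)).filter (fun j => ¬ sepx j)).card : ℝ) * r < W := by
    apply TF.card_nonsep hrpos hX (n-1) sepx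
    intro j hj
    intro x hx
    by_contra hxX
    exact hj ⟨x, hx, hxX⟩
  have hbady : (((Finset.range (n-1)).filter (fun j => ¬ sepy j)).card : ℝ) * r < W := by
    apply TF.card_nonsep hrpos hY (n-1) sepy
    intro j hj
    intro y hy
    by_contra hyY
    exact hj ⟨y, hy, hyY⟩
  have hbadx' : 4 * ((Finset.range (n-1)).filter (fun j => ¬ sepx j)).card ≤ m := by
    have h1 : (((Finset.range (n-1)).filter (fun j => ¬ sepx j)).card : ℝ) * r
        < ((m:ℝ)+1)/4 * r := hbadx.trans_le hWm
    have h2 : (((Finset.range (n-1)).filter (fun j => ¬ sepx j)).card : ℝ) < ((m:ℝ)+1)/4 :=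
      lt_of_mul_lt_mul_right (by linarith) hrpos.le
    have h3 : (4 * (((Finset.range (n-1)).filter (fun j => ¬ sepx j)).card : ℕ) : ℝ)
        < (m:ℝ) + 1 := by push_cast; linarith
    exact_mod_cast Nat.lt_succ_iff.1 (by exact_mod_cast h3)
  have hbady' : 4 * ((Finset.range (n-1)).filter (fun j => ¬ sepy j)).card ≤ m := by
    have h1 : (((Finset.range (n-1)).filter (fun j => ¬ sepy j)).card : ℝ) * r
        < ((m:ℝ)+1)/4 * r := hbady.trans_le hWm
    have h2 : (((Finset.range (n-1)).filter (fun j => ¬ sepy j)).card : ℝ) < ((m:ℝ)+1)/4 :=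
      lt_of_mul_lt_mul_right (by linarith) hrpos.le
    have h3 : (4 * (((Finset.range (n-1)).filter (fun j => ¬ sepy j)).card : ℕ) : ℝ)
        < (m:ℝ) + 1 := by push_cast; linarith
    exact_mod_cast Nat.lt_succ_iff.1 (by exact_mod_cast h3)
  have htotx : m + 1 ≤ clsx (n-1) := by
    have hsplit := Finset.card_filter_add_card_filter_not
      (s := Finset.range (n-1)) (p := fun j => sepx j)
    rw [Finset.card_range] at hsplit
    have hclseq : clsx (n-1) = ((Finset.range (n-1)).filter (fun j => sepx j)).card := by
      rw [hclsxdef]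
    omega
  have htoty : m + 1 ≤ clsy (n-1) := by
    have hsplit := Finset.card_filter_add_card_filter_not
      (s := Finset.range (n-1)) (p := fun j => sepy j)
    rw [Finset.card_range] at hsplit
    have hclseq : clsy (n-1) = ((Finset.range (n-1)).filter (fun j => sepy j)).card := by
      rw [hclsydef]
    omega
  -- selection of windows with prescribed classes
  have hselx : ∀ i : ℕ, ∃ s, s ≤ n - 1 ∧ (i ≤ m → clsx s = i) := by
    intro i
    by_cases hi : i ≤ m
    · obtain ⟨s, hs1, hs2⟩ := TF.nat_ivt hcls0x hstepx (n-1) i (by omega)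
      exact ⟨s, hs1, fun _ => hs2⟩
    · exact ⟨0, by omega, fun h => absurd h hi⟩
  have hsely : ∀ i : ℕ, ∃ s, s ≤ n - 1 ∧ (i ≤ m → clsy s = i) := by
    intro i
    by_cases hi : i ≤ m
    · obtain ⟨s, hs1, hs2⟩ := TF.nat_ivt hcls0y hstepy (n-1) i (by omega)
      exact ⟨s, hs1, fun _ => hs2⟩
    · exact ⟨0, by omega, fun h => absurd h hi⟩
  choose Sx hSxle hSxval using hselx
  choose Sy hSyle hSyval using hsely
  have hSxlt : ∀ i, Sx i < n := fun i => by have := hSxle i; omega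
  have hSylt : ∀ i, Sy i < n := fun i => by have := hSyle i; omega
  -- boundary condition for rectangles with free coordinates
  have hfrgen : ∀ u v u' v' : ℝ, u ∉ X → v ∉ X → u' ∉ Y → v' ∉ Y →
      c 0 - L/2 ≤ u → v ≤ c 0 + L/2 → c 1 - L/2 ≤ u' → v' ≤ c 1 + L/2 →
      ∀ z : Plane, z ∈ TF.Rect u v u' v' → z ∉ TF.Recto u v u' v' → z ∈ Ω := by
    intro u v u' v' huX hvX hu'Y hv'Y hu1 hv1 hu'1 hv'1 z hzR hzRo
    by_contra hzΩ
    obtain ⟨h1, h2, h3, h4⟩ := hzR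
    have hzF : z ∈ F := ⟨⟨by linarith, by linarith, by linarith, by linarith⟩, hzΩ⟩
    have hbd : z 0 = u ∨ z 0 = v ∨ z 1 = u' ∨ z 1 = v' := by
      by_contra hno
      push_neg at hno
      exact hzRo ⟨lt_of_le_of_ne h1 (Ne.symm hno.1), lt_of_le_of_ne h2 hno.2.1,
        lt_of_le_of_ne h3 (Ne.symm hno.2.2.1), lt_of_le_of_ne h4 hno.2.2.2⟩
    rcases hbd with h | h | h | h
    · exact huX ⟨z, hzF, h⟩
    · exact hvX ⟨z, hzF, h⟩
    · exact hu'Y ⟨z, hzF, h⟩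
    · exact hv'Y ⟨z, hzF, h⟩
  -- separation claims
  have claimx : ∀ s t s' t' : ℕ, s < n → t < n → s' < n → t' < n → clsx s < clsx s' →
      (ConnectedComponents.mk (⟨((Q s' t' : Plane) : OnePoint Plane),
        TF.mem_Cset (hQΩ s' t')⟩ : ↥(TF.Cset Ω))) ≠
      ConnectedComponents.mk (⟨((Q s t : Plane) : OnePoint Plane),
        TF.mem_Cset (hQΩ s t)⟩ : ↥(TF.Cset Ω)) := by
    intro s t s' t' hs ht hs' ht' hcls heq
    obtain ⟨j, hj1, hj2, hj3⟩ := hgapx s s' hcls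
    obtain ⟨xstar, hxsIcc, hxsX⟩ := hj3
    rw [Set.mem_Icc] at hxsIcc
    have hjn : (j:ℝ) + 2 ≤ (n:ℝ) := by
      have : j + 2 ≤ n := by omega
      exact_mod_cast this
    have hsj : (s:ℝ) ≤ (j:ℝ) := by exact_mod_cast hj1
    have hjs' : (j:ℝ) + 1 ≤ (s':ℝ) := by exact_mod_cast hj2
    have hxs2 : xstar ≤ c 0 + L/2 := by
      have h1 : 4*r*(j:ℝ) ≤ 4*r*((n:ℝ)-2) := by
        apply mul_le_mul_of_nonneg_left _ (by positivity)
        linarith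
      linarith [hxsIcc.2, hmargin, hW0, hrpos]
    have hmem := TF.comp_mem (hQΩ s t) (hQΩ s' t') heq
    have hfr := hfrgen xl xstar yb yt hxlX hxsX hybY hytY hxl1 hxs2 hyb1 hyt2
    have hqin : Q s t ∈ TF.Recto xl xstar yb yt := by
      refine ⟨hQxl s t, ?_, hQyb s t, hQyt s t ht⟩
      have h1 : 4*r*(s:ℝ) ≤ 4*r*(j:ℝ) := mul_le_mul_of_nonneg_left hsj (by positivity)
      linarith [hQ0ub s t, hxsIcc.1]
    obtain ⟨w, hw, hwR⟩ := TF.trap Ω xl xstar yb yt hfr (Q s t) (hQΩ s t) hqin _ hmem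
    have weq : Q s' t' = w := OnePoint.coe_injective hw
    rw [← weq] at hwR
    have h1 : 4*r*((j:ℝ)+1) ≤ 4*r*(s':ℝ) := mul_le_mul_of_nonneg_left hjs' (by positivity)
    have h2 := hQ0lb s' t'
    have h3 := hwR.2.1
    linarith [hxsIcc.2]
  have claimy : ∀ s t s' t' : ℕ, s < n → t < n → s' < n → t' < n → clsy t < clsy t' →
      (ConnectedComponents.mk (⟨((Q s' t' : Plane) : OnePoint Plane),
        TF.mem_Cset (hQΩ s' t')⟩ : ↥(TF.Cset Ω))) ≠
      ConnectedComponents.mk (⟨((Q s t : Plane) : OnePoint Plane),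
        TF.mem_Cset (hQΩ s t)⟩ : ↥(TF.Cset Ω)) := by
    intro s t s' t' hs ht hs' ht' hcls heq
    obtain ⟨j, hj1, hj2, hj3⟩ := hgapy t t' hcls
    obtain ⟨ystar, hysIcc, hysY⟩ := hj3
    rw [Set.mem_Icc] at hysIcc
    have hjn : (j:ℝ) + 2 ≤ (n:ℝ) := by
      have : j + 2 ≤ n := by omega
      exact_mod_cast this
    have htj : (t:ℝ) ≤ (j:ℝ) := by exact_mod_cast hj1
    have hjt' : (j:ℝ) + 1 ≤ (t':ℝ) := by exact_mod_cast hj2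
    have hys2 : ystar ≤ c 1 + L/2 := by
      have h1 : 4*r*(j:ℝ) ≤ 4*r*((n:ℝ)-2) := by
        apply mul_le_mul_of_nonneg_left _ (by positivity)
        linarith
      linarith [hysIcc.2, hmarginy, hW0, hrpos]
    have hmem := TF.comp_mem (hQΩ s t) (hQΩ s' t') heq
    have hfr := hfrgen xl xr yb ystar hxlX hxrX hybY hysY hxl1 hxr2 hyb1 hys2
    have hqin : Q s t ∈ TF.Recto xl xr yb ystar := by
      refine ⟨hQxl s t, hQxr s t hs, hQyb s t, ?_⟩
      have h1 : 4*r*(t:ℝ) ≤ 4*r*(j:ℝ) := mul_le_mul_of_nonneg_left htj (by positivity)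
      linarith [hQ1ub s t, hysIcc.1]
    obtain ⟨w, hw, hwR⟩ := TF.trap Ω xl xr yb ystar hfr (Q s t) (hQΩ s t) hqin _ hmem
    have weq : Q s' t' = w := OnePoint.coe_injective hw
    rw [← weq] at hwR
    have h1 : 4*r*((j:ℝ)+1) ≤ 4*r*(t':ℝ) := mul_le_mul_of_nonneg_left hjt' (by positivity)
    have h2 := hQ1lb s' t'
    have h3 := hwR.2.2.2
    linarith [hysIcc.2]
  have claiminf : ∀ s t : ℕ, s < n → t < n →
      (ConnectedComponents.mk (⟨(OnePoint.infty : OnePoint Plane),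
        TF.infty_mem_Cset Ω⟩ : ↥(TF.Cset Ω))) ≠
      ConnectedComponents.mk (⟨((Q s t : Plane) : OnePoint Plane),
        TF.mem_Cset (hQΩ s t)⟩ : ↥(TF.Cset Ω)) := by
    intro s t hs ht heq
    have hmem := TF.comp_mem_infty (hQΩ s t) heq
    have hfr := hfrgen xl xr yb yt hxlX hxrX hybY hytY hxl1 hxr2 hyb1 hyt2
    have hqin : Q s t ∈ TF.Recto xl xr yb yt :=
      ⟨hQxl s t, hQxr s t hs, hQyb s t, hQyt s t ht⟩
    obtain ⟨w, hw, hwR⟩ := TF.trap Ω xl xr yb yt hfr (Q s t) (hQΩ s t) hqin _ hmem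
    exact (OnePoint.coe_ne_infty w) hw.symm
  -- build the injection
  have hcard' : Nat.card (ConnectedComponents ↥(TF.Cset Ω)) = k := hcard
  haveI hfinT : Finite (ConnectedComponents ↥(TF.Cset Ω)) := by
    rcases finite_or_infinite (ConnectedComponents ↥(TF.Cset Ω)) with h | h
    · exact h
    · exfalso
      rw [Nat.card_eq_zero_of_infinite] at hcard'
      omega
  obtain ⟨g, hgnone, hgsome⟩ :
      ∃ g : Option (Fin (m+1) × Fin (m+1)) → ConnectedComponents ↥(TF.Cset Ω),
      (g none = ConnectedComponents.mk ⟨OnePoint.infty, TF.infty_mem_Cset Ω⟩) ∧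
      (∀ p : Fin (m+1) × Fin (m+1), g (some p) = ConnectedComponents.mk
        ⟨((Q (Sx p.1) (Sy p.2) : Plane) : OnePoint Plane),
          TF.mem_Cset (hQΩ (Sx p.1) (Sy p.2))⟩) := by
    refine ⟨fun o => Option.elim o
      (ConnectedComponents.mk ⟨OnePoint.infty, TF.infty_mem_Cset Ω⟩)
      (fun p => ConnectedComponents.mk
        ⟨((Q (Sx p.1) (Sy p.2) : Plane) : OnePoint Plane),
          TF.mem_Cset (hQΩ (Sx p.1) (Sy p.2))⟩), rfl, fun p => rfl⟩
  have hginj : Function.Injective g := by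
    intro o1 o2 heq
    rcases o1 with _ | p1 <;> rcases o2 with _ | p2
    · rfl
    · rw [hgnone, hgsome] at heq
      exact absurd heq (claiminf (Sx p2.1) (Sy p2.2) (hSxlt _) (hSylt _))
    · rw [hgnone, hgsome] at heq
      exact absurd heq.symm (claiminf (Sx p1.1) (Sy p1.2) (hSxlt _) (hSylt _))
    · rw [hgsome, hgsome] at heq
      have hxeq : clsx (Sx p1.1) = clsx (Sx p2.1) := by
        rcases lt_trichotomy (clsx (Sx p1.1)) (clsx (Sx p2.1)) with h | h | h
        · exact absurd heq.symm (claimx (Sx p1.1) (Sy p1.2) (Sx p2.1) (Sy p2.2)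
            (hSxlt _) (hSylt _) (hSxlt _) (hSylt _) h)
        · exact h
        · exact absurd heq (claimx (Sx p2.1) (Sy p2.2) (Sx p1.1) (Sy p1.2)
            (hSxlt _) (hSylt _) (hSxlt _) (hSylt _) h)
      have hyeq : clsy (Sy p1.2) = clsy (Sy p2.2) := by
        rcases lt_trichotomy (clsy (Sy p1.2)) (clsy (Sy p2.2)) with h | h | h
        · exact absurd heq.symm (claimy (Sx p1.1) (Sy p1.2) (Sx p2.1) (Sy p2.2)
            (hSxlt _) (hSylt _) (hSxlt _) (hSylt _) h)
        · exact h
        · exact absurd heq (claimy (Sx p2.1) (Sy p2.2) (Sx p1.1) (Sy p1.2)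
            (hSxlt _) (hSylt _) (hSxlt _) (hSylt _) h)
      have e1 := hSxval p1.1 (Nat.lt_succ_iff.1 p1.1.isLt)
      have e2 := hSxval p2.1 (Nat.lt_succ_iff.1 p2.1.isLt)
      have e3 := hSyval p1.2 (Nat.lt_succ_iff.1 p1.2.isLt)
      have e4 := hSyval p2.2 (Nat.lt_succ_iff.1 p2.2.isLt)
      have h1 : (p1.1 : ℕ) = (p2.1 : ℕ) := by omega
      have h2 : (p1.2 : ℕ) = (p2.2 : ℕ) := by omega
      have : p1 = p2 := Prod.ext (Fin.ext h1) (Fin.ext h2)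
      rw [this]
  have hle := Nat.card_le_card_of_injective g hginj
  have hcardopt : Nat.card (Option (Fin (m+1) × Fin (m+1))) = (m+1)*(m+1)+1 := by
    simp [Nat.card_eq_fintype_card]
  have hk2 : k ≤ (m+1)*(m+1) := by
    have hsq : (k:ℝ) = Real.sqrt (k:ℝ) * Real.sqrt (k:ℝ) :=
      (Real.mul_self_sqrt (Nat.cast_nonneg k)).symm
    have hlt : (k:ℝ) < ((m:ℝ)+1)*((m:ℝ)+1) := by nlinarith [hsqrt_lt, hsqrt_nonneg]
    have hle2 : (k:ℝ) ≤ (((m+1)*(m+1) : ℕ) : ℝ) := by push_cast; linarith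
    exact_mod_cast hle2
  rw [hcardopt, hcard'] at hle
  omega
end
end

section
/- Let K ⊆ ℝ^N be an open bounded convex set and x₀ ∈ K; set d_K(x₀) = min_{x∈∂K} |x−x₀|, D_K(x₀) = max_{x∈∂K} |x−x₀|, L_K = 2/d_K(x₀) and M_K = D_K(x₀)·(2 + D_K(x₀)/d_K(x₀)). There exists a bijection Φ : ℝ^N → ℝ^N such that: Φ(x₀) = x₀; Φ maps r(K−x₀)+x₀ onto the open ball B_r(x₀) for every r > 0; Φ is Lipschitz continuous with Lipschitz constant L_K; Φ^{−1} is Lipschitz continuous with Lipschitz constant M_K; and, for almost every x ∈ ℝ^N, (1/M_K)^N ≤ |det ∇Φ(x)| ≤ (L_K)^N and (1/L_K)^N ≤ |det ∇Φ^{−1}(x)| ≤ (M_K)^N. -/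
open MeasureTheory Metric
open scoped ENNReal

noncomputable section

open scoped RealInnerProductSpace

/-! ### Auxiliary lemmas -/

lemma unit_sub_le {E : Type*} [NormedAddCommGroup E] [InnerProductSpace ℝ E] {u v : E}
    (hu : u ≠ 0) (hv : v ≠ 0) :
    ‖‖u‖⁻¹ • u - ‖v‖⁻¹ • v‖ ≤ 2 * ‖u - v‖ / (‖u‖ + ‖v‖) := by
  have ha : 0 < ‖u‖ := norm_pos_iff.2 hu
  have hb : 0 < ‖v‖ := norm_pos_iff.2 hv
  set a := ‖u‖ with hadef
  set b := ‖v‖ with hbdef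
  set t : ℝ := ⟪u, v⟫ with htdef
  have ht : |t| ≤ a * b := abs_real_inner_le_norm u v
  have htlb : -(a*b) ≤ t := by
    have := neg_abs_le t; linarith [abs_le.1 ht |>.1]
  have e1 : ‖‖u‖⁻¹ • u - ‖v‖⁻¹ • v‖ ^ 2 = 2 - 2 * (t / (a * b)) := by
    rw [norm_sub_sq_real, real_inner_smul_left, real_inner_smul_right]
    rw [norm_smul, norm_smul]
    simp only [Real.norm_eq_abs, abs_inv, abs_norm]
    rw [← hadef, ← hbdef, ← htdef]
    field_simp
    ring
  have e2 : ‖u - v‖ ^ 2 = a ^ 2 - 2 * t + b ^ 2 := by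
    rw [norm_sub_sq_real, ← hadef, ← hbdef, ← htdef]
  have key : ‖‖u‖⁻¹ • u - ‖v‖⁻¹ • v‖ ^ 2 ≤ (2 * ‖u - v‖ / (a + b)) ^ 2 := by
    rw [e1, div_pow, mul_pow, e2]
    have hab : 0 < a * b := mul_pos ha hb
    have habs : 0 < (a + b) ^ 2 := by positivity
    rw [show 2 - 2 * (t / (a*b)) = (2 * (a*b) - 2*t) / (a*b) by field_simp]
    rw [div_le_div_iff₀ hab habs]
    nlinarith [mul_nonneg (sq_nonneg (a - b)) (by linarith : (0:ℝ) ≤ a * b + t)]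
  have h1 : (0:ℝ) ≤ 2 * ‖u - v‖ / (a + b) := by positivity
  calc ‖‖u‖⁻¹ • u - ‖v‖⁻¹ • v‖ = Real.sqrt (‖‖u‖⁻¹ • u - ‖v‖⁻¹ • v‖ ^ 2) := by
        rw [Real.sqrt_sq (norm_nonneg _)]
    _ ≤ Real.sqrt ((2 * ‖u - v‖ / (a + b)) ^ 2) := Real.sqrt_le_sqrt key
    _ = 2 * ‖u - v‖ / (a + b) := Real.sqrt_sq h1

section radial
variable {E : Type*} [NormedAddCommGroup E] [InnerProductSpace ℝ E] {g : E → ℝ} {d D : ℝ}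

lemma radial_lip_aux (hd : 0 < d) (hgnn : ∀ v, 0 ≤ g v) (hub : ∀ v, g v ≤ ‖v‖ / d)
    (hlip : ∀ u v, g u - g v ≤ ‖u - v‖ / d) {u v : E} (hle : ‖v‖ ≤ ‖u‖) :
    ‖(g u / ‖u‖) • u - (g v / ‖v‖) • v‖ ≤ (2 / d) * ‖u - v‖ := by
  by_cases hu : u = 0
  · have hv : v = 0 := by
      have : ‖v‖ = 0 := le_antisymm (by simpa [hu] using hle) (norm_nonneg v)
      simpa using this
    simp [hu, hv]
  by_cases hv : v = 0
  · have h1 : ‖(g u / ‖u‖) • u‖ = g u := by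
      rw [norm_smul, Real.norm_eq_abs, abs_of_nonneg (div_nonneg (hgnn u) (norm_nonneg u)),
        div_mul_cancel₀]
      exact (norm_pos_iff.2 hu).ne'
    have hun : 0 ≤ ‖u‖ := norm_nonneg u
    simp only [hv, norm_zero, smul_zero, sub_zero]
    rw [h1]
    calc g u ≤ ‖u‖ / d := hub u
      _ ≤ 2 * ‖u‖ / d := by gcongr; linarith
      _ = (2 / d) * ‖u‖ := by ring
  have ha : 0 < ‖u‖ := norm_pos_iff.2 hu
  have hb : 0 < ‖v‖ := norm_pos_iff.2 hv
  have decomp : (g u / ‖u‖) • u - (g v / ‖v‖) • v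
      = (g u - g v) • (‖u‖⁻¹ • u) + (g v) • (‖u‖⁻¹ • u - ‖v‖⁻¹ • v) := by
    rw [div_eq_mul_inv, div_eq_mul_inv]
    module
  have habs : |g u - g v| ≤ ‖u - v‖ / d := by
    rw [abs_sub_le_iff]
    refine ⟨hlip u v, ?_⟩
    have := hlip v u
    rwa [norm_sub_rev] at this
  have hunit : ‖‖u‖⁻¹ • u - ‖v‖⁻¹ • v‖ ≤ 2 * ‖u - v‖ / (‖u‖ + ‖v‖) := unit_sub_le hu hv
  have hnu : ‖‖u‖⁻¹ • u‖ = 1 := by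
    rw [norm_smul, Real.norm_eq_abs, abs_inv, abs_norm, inv_mul_cancel₀ ha.ne']
  have th1 : ‖(g u - g v) • (‖u‖⁻¹ • u)‖ = |g u - g v| := by
    rw [norm_smul, hnu, mul_one, Real.norm_eq_abs]
  have th2 : ‖(g v) • (‖u‖⁻¹ • u - ‖v‖⁻¹ • v)‖ = g v * ‖‖u‖⁻¹ • u - ‖v‖⁻¹ • v‖ := by
    rw [norm_smul, Real.norm_eq_abs, abs_of_nonneg (hgnn v)]
  have hX : 0 ≤ ‖u - v‖ := norm_nonneg _
  have hstep : ‖v‖ * (2 * ‖u - v‖ / (‖u‖ + ‖v‖)) ≤ ‖u - v‖ := by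
    rw [mul_div_assoc', div_le_iff₀ (by positivity)]
    nlinarith
  calc ‖(g u / ‖u‖) • u - (g v / ‖v‖) • v‖
      ≤ ‖(g u - g v) • (‖u‖⁻¹ • u)‖ + ‖(g v) • (‖u‖⁻¹ • u - ‖v‖⁻¹ • v)‖ := by
        rw [decomp]; exact norm_add_le _ _
    _ = |g u - g v| + g v * ‖‖u‖⁻¹ • u - ‖v‖⁻¹ • v‖ := by rw [th1, th2]
    _ ≤ ‖u - v‖ / d + (‖v‖ / d) * (2 * ‖u - v‖ / (‖u‖ + ‖v‖)) :=
        add_le_add habs (mul_le_mul (hub v) hunit (norm_nonneg _) (by positivity))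
    _ = ‖u - v‖ / d + (‖v‖ * (2 * ‖u - v‖ / (‖u‖ + ‖v‖))) / d := by ring
    _ ≤ ‖u - v‖ / d + ‖u - v‖ / d := by gcongr
    _ = (2 / d) * ‖u - v‖ := by ring

lemma radial_lip (hd : 0 < d) (hgnn : ∀ v, 0 ≤ g v) (hub : ∀ v, g v ≤ ‖v‖ / d)
    (hlip : ∀ u v, g u - g v ≤ ‖u - v‖ / d) (u v : E) :
    ‖(g u / ‖u‖) • u - (g v / ‖v‖) • v‖ ≤ (2 / d) * ‖u - v‖ := by
  rcases le_total ‖v‖ ‖u‖ with h | h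
  · exact radial_lip_aux hd hgnn hub hlip h
  · rw [norm_sub_rev, norm_sub_rev u v]
    exact radial_lip_aux hd hgnn hub hlip h

lemma radial_inv_lip (hd : 0 < d) (hD : 0 < D) (hgnn : ∀ v, 0 ≤ g v)
    (hlb : ∀ v, ‖v‖ / D ≤ g v)
    (hlip : ∀ u v, g u - g v ≤ ‖u - v‖ / d) (u v : E) :
    ‖(‖u‖ / g u) • u - (‖v‖ / g v) • v‖ ≤ (D * (2 + D / d)) * ‖u - v‖ := by
  have hDd : 0 ≤ D / d := div_nonneg hD.le hd.le
  have hM1 : D ≤ D * (2 + D / d) := by nlinarith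
  have single : ∀ w : E, ‖(‖w‖ / g w) • w‖ ≤ D * ‖w‖ := by
    intro w
    by_cases hw : w = 0
    · simp [hw]
    have hgw : 0 < g w := lt_of_lt_of_le (div_pos (norm_pos_iff.2 hw) hD) (hlb w)
    rw [norm_smul, Real.norm_eq_abs, abs_of_nonneg (div_nonneg (norm_nonneg w) (hgnn w))]
    have : ‖w‖ / g w ≤ D := by
      rw [div_le_iff₀ hgw]
      have := hlb w
      rw [div_le_iff₀ hD] at this
      linarith
    exact mul_le_mul_of_nonneg_right this (norm_nonneg w)
  by_cases hu : u = 0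
  · subst hu
    simp only [norm_zero, zero_div, zero_smul, smul_zero, zero_sub, norm_neg]
    exact (single v).trans (by nlinarith [norm_nonneg v])
  by_cases hv : v = 0
  · subst hv
    simp only [norm_zero, zero_div, zero_smul, smul_zero, sub_zero]
    exact (single u).trans (by nlinarith [norm_nonneg u])
  have ha : 0 < ‖u‖ := norm_pos_iff.2 hu
  have hb : 0 < ‖v‖ := norm_pos_iff.2 hv
  have hp : 0 < g u := lt_of_lt_of_le (div_pos ha hD) (hlb u)
  have hq : 0 < g v := lt_of_lt_of_le (div_pos hb hD) (hlb v)
  set a := ‖u‖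
  set b := ‖v‖
  set p := g u
  set q := g v
  set X := ‖u - v‖ with hXdef
  have hX : 0 ≤ X := norm_nonneg _
  have hs1 : a / p ≤ D := by
    rw [div_le_iff₀ hp]
    have := hlb u; rw [div_le_iff₀ hD] at this; linarith
  have hs2 : b / q ≤ D := by
    rw [div_le_iff₀ hq]
    have := hlb v; rw [div_le_iff₀ hD] at this; linarith
  have decomp : (a / p) • u - (b / q) • v = (a / p) • (u - v) + (a / p - b / q) • v := by
    module
  have habsg : |q - p| ≤ X / d := by
    rw [abs_sub_le_iff]
    constructor
    · have := hlip v u; rwa [norm_sub_rev] at this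
    · exact hlip u v
  have habsn : |a - b| ≤ X := abs_norm_sub_norm_le u v
  have hnum : |a * q - b * p| ≤ a * (X / d) + p * X := by
    have e : a * q - b * p = a * (q - p) + p * (a - b) := by ring
    rw [e]
    calc |a * (q - p) + p * (a - b)| ≤ |a * (q - p)| + |p * (a - b)| := abs_add_le _ _
      _ = a * |q - p| + p * |a - b| := by
          rw [abs_mul, abs_mul, abs_of_pos ha, abs_of_pos hp]
      _ ≤ a * (X / d) + p * X := by
          exact add_le_add (mul_le_mul_of_nonneg_left habsg ha.le)
            (mul_le_mul_of_nonneg_left habsn hp.le)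
  have hap : a ≤ D * p := by rwa [div_le_iff₀ hp] at hs1
  have hbq : b ≤ D * q := by rwa [div_le_iff₀ hq] at hs2
  have hXd : 0 ≤ X / d := by positivity
  have hsecond : |a / p - b / q| * b ≤ (D * (D / d) + D) * X := by
    have key : |a / p - b / q| = |a * q - b * p| / (p * q) := by
      rw [div_sub_div a b hp.ne' hq.ne', show a * q - p * b = a * q - b * p by ring,
        abs_div, abs_of_pos (mul_pos hp hq)]
    rw [key, div_mul_eq_mul_div, div_le_iff₀ (mul_pos hp hq)]
    have hnum' : |a * q - b * p| * b ≤ (a * (X / d) + p * X) * b :=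
      mul_le_mul_of_nonneg_right hnum hb.le
    have hab : a * b ≤ (D * p) * (D * q) :=
      mul_le_mul hap hbq hb.le (by positivity)
    have t1 : a * (X / d) * b ≤ (D * p) * (X / d) * (D * q) := by
      calc a * (X / d) * b = (a * b) * (X / d) := by ring
        _ ≤ ((D * p) * (D * q)) * (X / d) := mul_le_mul_of_nonneg_right hab hXd
        _ = (D * p) * (X / d) * (D * q) := by ring
    have t2 : p * X * b ≤ p * X * (D * q) :=
      mul_le_mul_of_nonneg_left hbq (by positivity)
    calc |a * q - b * p| * b ≤ (a * (X / d) + p * X) * b := hnum'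
      _ = a * (X / d) * b + p * X * b := by ring
      _ ≤ (D * p) * (X / d) * (D * q) + p * X * (D * q) := add_le_add t1 t2
      _ = (D * (D / d) + D) * X * (p * q) := by
          field_simp
  calc ‖(a / p) • u - (b / q) • v‖
      ≤ ‖(a / p) • (u - v)‖ + ‖(a / p - b / q) • v‖ := by rw [decomp]; exact norm_add_le _ _
    _ = (a / p) * X + |a / p - b / q| * b := by
        rw [norm_smul, norm_smul, Real.norm_eq_abs, Real.norm_eq_abs,
          abs_of_nonneg (by positivity : (0:ℝ) ≤ a / p)]
    _ ≤ D * X + (D * (D / d) + D) * X := by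
        refine add_le_add (mul_le_mul_of_nonneg_right hs1 hX) hsecond
    _ = (D * (2 + D / d)) * X := by ring

end radial

lemma antilip_deriv {E F : Type*} [NormedAddCommGroup E] [NormedSpace ℝ E]
    [NormedAddCommGroup F] [NormedSpace ℝ F] {f : E → F} {A : E →L[ℝ] F} {x : E}
    (hA : HasFDerivAt f A x) {M : ℝ} (hM : 0 < M)
    (h : ∀ p q, dist p q ≤ M * dist (f p) (f q)) (v : E) : ‖v‖ ≤ M * ‖A v‖ := by
  have hg : HasDerivAt (fun t : ℝ => f (x + t • v)) (A v) 0 := by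
    have hin : HasDerivAt (fun t : ℝ => x + t • v) v 0 := by
      simpa using ((hasDerivAt_id (0 : ℝ)).smul_const v).const_add x
    have hA' : HasFDerivAt f A (x + (0:ℝ) • v) := by simpa using hA
    exact HasFDerivAt.comp_hasDerivAt (0:ℝ) hA' hin
  have hslope : Filter.Tendsto (slope (fun t : ℝ => f (x + t • v)) 0) (nhdsWithin 0 {(0:ℝ)}ᶜ)
      (nhds (A v)) := hasDerivAt_iff_tendsto_slope.1 hg
  have hnorm : Filter.Tendsto (fun t => ‖slope (fun s : ℝ => f (x + s • v)) 0 t‖)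
      (nhdsWithin 0 {(0:ℝ)}ᶜ) (nhds ‖A v‖) := hslope.norm
  have hev : ∀ t : ℝ, t ∈ ({(0:ℝ)}ᶜ : Set ℝ) →
      M⁻¹ * ‖v‖ ≤ ‖slope (fun s : ℝ => f (x + s • v)) 0 t‖ := by
    intro t ht
    have ht0 : t ≠ 0 := ht
    have hd : dist (x + t • v) (x + (0:ℝ) • v) ≤ M * dist (f (x + t • v)) (f (x + (0:ℝ) • v)) :=
      h _ _
    simp only [zero_smul, add_zero] at hd
    have hdist : dist (x + t • v) x = |t| * ‖v‖ := by
      rw [dist_eq_norm]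
      simp [norm_smul]
    rw [slope_def_module]
    simp only [zero_smul, add_zero, sub_zero]
    rw [norm_smul, norm_inv, Real.norm_eq_abs]
    have habs : 0 < |t| := abs_pos.2 ht0
    rw [← dist_eq_norm]
    have : M⁻¹ * (|t| * ‖v‖) ≤ dist (f (x + t • v)) (f x) := by
      rw [inv_mul_le_iff₀ hM, ← hdist]
      exact hd
    calc M⁻¹ * ‖v‖ = |t|⁻¹ * (M⁻¹ * (|t| * ‖v‖)) := by field_simp
      _ ≤ |t|⁻¹ * dist (f (x + t • v)) (f x) := by gcongr
  have hle : M⁻¹ * ‖v‖ ≤ ‖A v‖ := by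
    refine ge_of_tendsto hnorm ?_
    filter_upwards [self_mem_nhdsWithin] with t ht using hev t ht
  rwa [inv_mul_le_iff₀ hM] at hle

lemma det_bound {N : ℕ} (A : EuclideanSpace ℝ (Fin N) →L[ℝ] EuclideanSpace ℝ (Fin N))
    {L M : ℝ} (hL : 0 ≤ L) (hM : 0 < M) (hop : ‖A‖ ≤ L) (hlow : ∀ v, ‖v‖ ≤ M * ‖A v‖) :
    (1 / M) ^ N ≤ |A.det| ∧ |A.det| ≤ L ^ N := by
  set E := EuclideanSpace ℝ (Fin N)
  have hfr : Module.finrank ℝ E = N := finrank_euclideanSpace_fin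
  set μ : Measure E := volume
  have hB0 : 0 < μ (ball (0:E) 1) := measure_ball_pos μ 0 one_pos
  have hBt : μ (ball (0:E) 1) ≠ ⊤ := measure_ball_lt_top.ne
  have him : μ ((A : E →ₗ[ℝ] E) '' closedBall 0 1)
      = ENNReal.ofReal |LinearMap.det (A : E →ₗ[ℝ] E)| * μ (closedBall 0 1) :=
    Measure.addHaar_image_linearMap μ _ _
  have hdet : A.det = LinearMap.det (A : E →ₗ[ℝ] E) := rfl
  have hcb1 : μ (closedBall (0:E) 1) = μ (ball (0:E) 1) := by
    rw [Measure.addHaar_closedBall μ _ zero_le_one]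
    simp [hfr]
  constructor
  · have hinj : Function.Injective (A : E →ₗ[ℝ] E) := by
      intro p q hpq
      have : ‖p - q‖ ≤ M * ‖A (p - q)‖ := hlow _
      rw [map_sub] at this
      have hz : A p - A q = 0 := by rw [show A p = (A : E →ₗ[ℝ] E) p from rfl,
        show A q = (A : E →ₗ[ℝ] E) q from rfl, hpq, sub_self]
      rw [hz, norm_zero, mul_zero] at this
      have := le_antisymm this (norm_nonneg _)
      rwa [norm_sub_eq_zero_iff] at this
    have hsurj : Function.Surjective (A : E →ₗ[ℝ] E) :=
      (LinearMap.injective_iff_surjective).1 hinj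
    have hsub : closedBall (0:E) M⁻¹ ⊆ (A : E →ₗ[ℝ] E) '' closedBall 0 1 := by
      intro w hw
      obtain ⟨v, hv⟩ := hsurj w
      refine ⟨v, ?_, hv⟩
      rw [mem_closedBall, dist_zero_right] at hw ⊢
      have := hlow v
      rw [show (A : E →ₗ[ℝ] E) v = A v from rfl] at hv
      rw [hv] at this
      calc ‖v‖ ≤ M * ‖w‖ := this
        _ ≤ M * M⁻¹ := by gcongr
        _ = 1 := mul_inv_cancel₀ hM.ne'
    have hmes : μ (closedBall (0:E) M⁻¹) ≤ ENNReal.ofReal |A.det| * μ (ball (0:E) 1) := by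
      rw [hdet]
      calc μ (closedBall (0:E) M⁻¹) ≤ μ ((A : E →ₗ[ℝ] E) '' closedBall 0 1) := measure_mono hsub
        _ = ENNReal.ofReal |LinearMap.det (A : E →ₗ[ℝ] E)| * μ (closedBall 0 1) := him
        _ = _ := by rw [hcb1]
    rw [Measure.addHaar_closedBall μ _ (by positivity : (0:ℝ) ≤ M⁻¹), hfr] at hmes
    have := (ENNReal.mul_le_mul_iff_left hB0.ne' hBt).1 hmes
    rw [ENNReal.ofReal_le_ofReal_iff (abs_nonneg _)] at this
    calc (1 / M) ^ N = M⁻¹ ^ N := by rw [one_div]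
      _ ≤ |A.det| := this
  · have hsub : (A : E →ₗ[ℝ] E) '' closedBall 0 1 ⊆ closedBall (0:E) L := by
      rintro - ⟨v, hv, rfl⟩
      rw [mem_closedBall, dist_zero_right] at hv ⊢
      calc ‖(A : E →ₗ[ℝ] E) v‖ = ‖A v‖ := rfl
        _ ≤ ‖A‖ * ‖v‖ := A.le_opNorm v
        _ ≤ L * 1 := mul_le_mul hop hv (norm_nonneg _) hL
        _ = L := mul_one L
    have hmes : ENNReal.ofReal |A.det| * μ (ball (0:E) 1) ≤ μ (closedBall (0:E) L) := by
      rw [hdet, ← hcb1, ← him]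
      exact measure_mono hsub
    rw [Measure.addHaar_closedBall μ _ hL, hfr] at hmes
    have := (ENNReal.mul_le_mul_iff_left hB0.ne' hBt).1 hmes
    rwa [ENNReal.ofReal_le_ofReal_iff (by positivity)] at this

lemma cross_frontier {X : Type*} [TopologicalSpace X] {s t : Set X} (ht : IsPreconnected t)
    (h1 : (t ∩ interior s).Nonempty) (h2 : (t ∩ (closure s)ᶜ).Nonempty) :
    (t ∩ frontier s).Nonempty := by
  by_contra hemp
  rw [Set.not_nonempty_iff_eq_empty] at hemp
  have hsub : t ⊆ interior s ∪ (closure s)ᶜ := by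
    intro p hp
    by_cases hcl : p ∈ closure s
    · left
      by_contra hint
      have : p ∈ frontier s := ⟨hcl, hint⟩
      exact absurd (Set.eq_empty_iff_forall_notMem.1 hemp p) (fun h => h ⟨hp, this⟩)
    · right; exact hcl
  obtain ⟨z, -, hz1, hz2⟩ := ht (interior s) (closure s)ᶜ isOpen_interior
    isClosed_closure.isOpen_compl hsub h1 h2
  exact hz2 (subset_closure (interior_subset hz1))

lemma dist_left_segment {E : Type*} [NormedAddCommGroup E] [NormedSpace ℝ E]
    {x y z : E} (hz : z ∈ segment ℝ x y) : dist x z ≤ dist x y := by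
  obtain ⟨a, b, ha, hb, hab, rfl⟩ := hz
  have ha1 : a = 1 - b := by linarith
  subst ha1
  have : x - ((1 - b) • x + b • y) = b • (x - y) := by module
  rw [dist_eq_norm, this, norm_smul, Real.norm_eq_abs, abs_of_nonneg hb, dist_eq_norm]
  nlinarith [norm_nonneg (x - y)]

/-- Euclidean space `ℝ^N`. -/
abbrev Spc (N : ℕ) := EuclideanSpace ℝ (Fin N)

/-- `d_K(x₀) = min_{x ∈ ∂K} |x - x₀|`. -/
noncomputable def dK (N : ℕ) (K : Set (Spc N)) (x₀ : Spc N) : ℝ :=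
  Metric.infDist x₀ (frontier K)

/-- `D_K(x₀) = max_{x ∈ ∂K} |x - x₀|`. -/
noncomputable def DK (N : ℕ) (K : Set (Spc N)) (x₀ : Spc N) : ℝ :=
  sSup ((fun x => dist x x₀) '' frontier K)

set_option maxHeartbeats 2000000 in
/-- A bi-Lipschitz homeomorphism of `ℝ^N` mapping the dilations of a bounded open convex set `K`
onto balls, with explicit Lipschitz constants and a.e. two-sided Jacobian bounds. -/
theorem biLipschitz_convex_to_ball (N : ℕ) (hN : 1 ≤ N) (K : Set (Spc N))
    (hKopen : IsOpen K) (hKbdd : Bornology.IsBounded K) (hKconv : Convex ℝ K)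
    (x₀ : Spc N) (hx₀ : x₀ ∈ K) :
    ∃ Φ Ψ : Spc N → Spc N,
      Function.LeftInverse Ψ Φ ∧ Function.RightInverse Ψ Φ ∧
      Φ x₀ = x₀ ∧
      (∀ r : ℝ, 0 < r → Φ '' ((fun x => r • (x - x₀) + x₀) '' K) = ball x₀ r) ∧
      LipschitzWith (Real.toNNReal (2 / dK N K x₀)) Φ ∧
      LipschitzWith (Real.toNNReal (DK N K x₀ * (2 + DK N K x₀ / dK N K x₀))) Ψ ∧
      (∀ᵐ x : Spc N,
        (1 / (DK N K x₀ * (2 + DK N K x₀ / dK N K x₀))) ^ N ≤ |(fderiv ℝ Φ x).det| ∧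
        |(fderiv ℝ Φ x).det| ≤ (2 / dK N K x₀) ^ N) ∧
      (∀ᵐ x : Spc N,
        (1 / (2 / dK N K x₀)) ^ N ≤ |(fderiv ℝ Ψ x).det| ∧
        |(fderiv ℝ Ψ x).det| ≤ (DK N K x₀ * (2 + DK N K x₀ / dK N K x₀)) ^ N) := by
  classical
  haveI : Nontrivial (Spc N) := by
    apply Module.nontrivial_of_finrank_pos (R := ℝ)
    rw [finrank_euclideanSpace_fin]
    omega
  set d := dK N K x₀ with hd_def
  set D := DK N K x₀ with hD_def
  have hKne : K.Nonempty := ⟨x₀, hx₀⟩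
  have hKuniv : K ≠ Set.univ := by
    intro h
    exact NormedSpace.unbounded_univ ℝ (Spc N) (h ▸ hKbdd)
  have hfr : (frontier K).Nonempty := nonempty_frontier_iff.2 ⟨hKne, hKuniv⟩
  have hx₀f : x₀ ∉ frontier K := by
    intro h
    exact h.2 (by rwa [hKopen.interior_eq])
  have hd : 0 < d := by
    rw [hd_def, dK]
    exact (isClosed_frontier.notMem_iff_infDist_pos hfr).1 hx₀f
  have hfrbdd : Bornology.IsBounded (frontier K) :=
    (hKbdd.closure).subset frontier_subset_closure
  obtain ⟨R, hR⟩ := hfrbdd.subset_closedBall x₀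
  have hbdd : BddAbove ((fun x => dist x x₀) '' frontier K) := by
    refine ⟨R, ?_⟩
    rintro - ⟨z, hz, rfl⟩
    have := hR hz
    rwa [mem_closedBall] at this
  have hfrD : ∀ z ∈ frontier K, dist z x₀ ≤ D := fun z hz =>
    le_csSup hbdd ⟨z, hz, rfl⟩
  have hdD : d ≤ D := by
    obtain ⟨z, hz⟩ := hfr
    calc d ≤ dist x₀ z := Metric.infDist_le_dist_of_mem hz
      _ = dist z x₀ := dist_comm _ _
      _ ≤ D := hfrD z hz
  have hD : 0 < D := lt_of_lt_of_le hd hdD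
  -- ball and closedBall inclusions for K
  have hballK : ball x₀ d ⊆ K := by
    intro y hy
    by_contra hyK
    have hyd : dist y x₀ < d := mem_ball.1 hy
    by_cases hycl : y ∈ closure K
    · have hyfr : y ∈ frontier K := ⟨hycl, by rwa [hKopen.interior_eq]⟩
      have := hfrD y hyfr
      have h2 : d ≤ dist x₀ y := Metric.infDist_le_dist_of_mem hyfr
      rw [dist_comm] at h2
      linarith
    · obtain ⟨z, hzseg, hzfr⟩ := cross_frontier (convex_segment x₀ y).isPreconnected
        ⟨x₀, left_mem_segment ℝ x₀ y, by rw [hKopen.interior_eq]; exact hx₀⟩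
        ⟨y, right_mem_segment ℝ x₀ y, hycl⟩
      have h1 : d ≤ dist x₀ z := Metric.infDist_le_dist_of_mem hzfr
      have h2 : dist x₀ z ≤ dist x₀ y := dist_left_segment hzseg
      rw [dist_comm x₀ y] at h2
      linarith
  have hKD : K ⊆ closedBall x₀ D := by
    intro x hx
    rcases eq_or_ne x x₀ with rfl | hne
    · simp [mem_closedBall, hD.le]
    have hxx : 0 < ‖x - x₀‖ := by
      rw [norm_pos_iff, sub_ne_zero]; exact hne
    obtain ⟨Rb, hRb⟩ := hKbdd.subset_closedBall x₀
    have hclRb : closure K ⊆ closedBall x₀ Rb :=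
      closure_minimal hRb Metric.isClosed_closedBall
    set T : ℝ := max 1 ((|Rb| + 1) / ‖x - x₀‖) with hT_def
    have hT1 : 1 ≤ T := le_max_left _ _
    have hTnorm : |Rb| + 1 ≤ T * ‖x - x₀‖ := by
      have : (|Rb| + 1) / ‖x - x₀‖ ≤ T := le_max_right _ _
      rwa [div_le_iff₀ hxx] at this
    set y : Spc N := x₀ + T • (x - x₀) with hy_def
    have hyout : y ∉ closure K := by
      intro hy
      have := hclRb hy
      rw [mem_closedBall, hy_def] at this
      have hnorm : dist (x₀ + T • (x - x₀)) x₀ = T * ‖x - x₀‖ := by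
        rw [dist_eq_norm, add_sub_cancel_left, norm_smul, Real.norm_eq_abs,
          abs_of_pos (lt_of_lt_of_le one_pos hT1)]
      rw [hnorm] at this
      linarith [hTnorm, le_abs_self Rb]
    obtain ⟨z, hzseg, hzfr⟩ := cross_frontier (convex_segment x y).isPreconnected
      ⟨x, left_mem_segment ℝ x y, by rw [hKopen.interior_eq]; exact hx⟩
      ⟨y, right_mem_segment ℝ x y, hyout⟩
    obtain ⟨a, b, ha, hb, hab, hz_eq⟩ := hzseg
    have ha1 : a = 1 - b := by linarith
    have hz1 : z - x₀ = (a + b * T) • (x - x₀) := by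
      rw [← hz_eq, hy_def, ha1]
      module
    have hcoeff : 1 ≤ a + b * T := by nlinarith
    have hdistz : dist z x₀ = (a + b * T) * ‖x - x₀‖ := by
      rw [dist_eq_norm, hz1, norm_smul, Real.norm_eq_abs,
        abs_of_pos (lt_of_lt_of_le one_pos hcoeff)]
    have h1 : dist x x₀ ≤ dist z x₀ := by
      rw [hdistz, dist_eq_norm]
      nlinarith
    rw [mem_closedBall]
    exact h1.trans (hfrD z hzfr)
  -- translated set and gauge
  set C : Set (Spc N) := (fun x => x - x₀) '' K with hC_def
  have hCmem : ∀ v : Spc N, v ∈ C ↔ v + x₀ ∈ K := by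
    intro v
    constructor
    · rintro ⟨x, hx, rfl⟩
      rwa [sub_add_cancel]
    · intro h
      exact ⟨v + x₀, h, add_sub_cancel_right v x₀⟩
  have h0C : (0 : Spc N) ∈ C := by rw [hCmem]; simpa using hx₀
  have hCopen : IsOpen C := by
    have : C = (fun v : Spc N => v + x₀) ⁻¹' K := Set.ext fun v => hCmem v
    rw [this]
    exact hKopen.preimage (continuous_id.add continuous_const)
  have hCconv : Convex ℝ C := by
    intro u hu v hv a b ha hb hab
    rw [hCmem] at hu hv ⊢
    have e : a • (u + x₀) + b • (v + x₀) = a • u + b • v + (a + b) • x₀ := by module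
    rw [hab, one_smul] at e
    have hK := hKconv hu hv ha hb hab
    rw [e] at hK
    exact hK
  have hCball : ball (0 : Spc N) d ⊆ C := by
    intro v hv
    rw [hCmem]
    apply hballK
    rw [mem_ball, dist_eq_norm, add_sub_cancel_right]
    rwa [mem_ball, dist_eq_norm, sub_zero] at hv
  have hCD : C ⊆ closedBall 0 D := by
    intro v hv
    rw [hCmem] at hv
    have h2 := hKD hv
    rw [mem_closedBall, dist_eq_norm, add_sub_cancel_right] at h2
    rwa [mem_closedBall, dist_eq_norm, sub_zero]
  -- the gauge of `C`
  set g : Spc N → ℝ := gauge C with hg_def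
  have habsorb : Absorbent ℝ C := absorbent_nhds_zero (hCopen.mem_nhds h0C)
  have hgnn : ∀ v : Spc N, 0 ≤ g v := fun v => gauge_nonneg v
  have hub : ∀ v : Spc N, g v ≤ ‖v‖ / d := by
    intro v
    have h1 : gauge C v ≤ gauge (ball (0 : Spc N) d) v :=
      gauge_mono (absorbent_ball_zero hd) hCball v
    rwa [gauge_ball hd.le] at h1
  have hlb : ∀ v : Spc N, ‖v‖ / D ≤ g v := fun v =>
    le_gauge_of_subset_closedBall habsorb hD.le hCD
  have hliplem : ∀ u v : Spc N, g u - g v ≤ ‖u - v‖ / d := by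
    intro u v
    have h1 : g (v + (u - v)) ≤ g v + g (u - v) := gauge_add_le hCconv habsorb v (u - v)
    rw [add_sub_cancel] at h1
    linarith [hub (u - v)]
  have hsmul : ∀ (c : ℝ), 0 ≤ c → ∀ v : Spc N, g (c • v) = c * g v := by
    intro c hc v
    rw [hg_def, gauge_smul_of_nonneg hc, smul_eq_mul]
  have hmem_iff : ∀ v : Spc N, v ∈ C ↔ g v < 1 := by
    intro v
    rw [← gauge_lt_one_eq_self_of_isOpen hCconv h0C hCopen]
    exact Iff.rfl
  have hgpos : ∀ v : Spc N, v ≠ 0 → 0 < g v := fun v hv =>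
    lt_of_lt_of_le (div_pos (norm_pos_iff.2 hv) hD) (hlb v)
  have hg0 : g 0 = 0 := gauge_zero
  -- the radial maps
  set f : Spc N → Spc N := fun v => (g v / ‖v‖) • v with hf_def
  set finv : Spc N → Spc N := fun w => (‖w‖ / g w) • w with hfinv_def
  have hf0 : f 0 = 0 := by simp [hf_def]
  have hfinv0 : finv 0 = 0 := by simp [hfinv_def]
  have hnf : ∀ v : Spc N, ‖f v‖ = g v := by
    intro v
    by_cases hv : v = 0
    · simp [hv, hf_def, hg0]
    · simp only [hf_def]
      rw [norm_smul, Real.norm_eq_abs, abs_of_nonneg (div_nonneg (hgnn v) (norm_nonneg v)),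
        div_mul_cancel₀ _ (norm_pos_iff.2 hv).ne']
  have hinv1 : ∀ v : Spc N, finv (f v) = v := by
    intro v
    by_cases hv : v = 0
    · rw [hv, hf0, hfinv0]
    have hnv : (0:ℝ) < ‖v‖ := norm_pos_iff.2 hv
    have hgv : 0 < g v := hgpos v hv
    have hgfv : g (f v) = (g v / ‖v‖) * g v := by
      simp only [hf_def]
      exact hsmul _ (div_nonneg (hgnn v) (norm_nonneg v)) v
    simp only [hfinv_def]
    rw [hnf v, hgfv]
    simp only [hf_def]
    rw [smul_smul]
    have he : g v / (g v / ‖v‖ * g v) * (g v / ‖v‖) = 1 := by field_simp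
    rw [he, one_smul]
  have hgfinv : ∀ w : Spc N, g (finv w) = ‖w‖ := by
    intro w
    by_cases hw : w = 0
    · simp [hw, hfinv0, hg0]
    have hgw := hgpos w hw
    simp only [hfinv_def]
    rw [hsmul _ (div_nonneg (norm_nonneg w) (hgnn w)) w]
    field_simp
  have hinv2 : ∀ w : Spc N, f (finv w) = w := by
    intro w
    by_cases hw : w = 0
    · rw [hw, hfinv0, hf0]
    have hnw : (0:ℝ) < ‖w‖ := norm_pos_iff.2 hw
    have hgw : 0 < g w := hgpos w hw
    have hnfinv : ‖finv w‖ = ‖w‖ / g w * ‖w‖ := by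
      simp only [hfinv_def]
      rw [norm_smul, Real.norm_eq_abs, abs_of_nonneg (div_nonneg (norm_nonneg w) (hgnn w))]
    simp only [hf_def]
    rw [hgfinv w, hnfinv]
    simp only [hfinv_def]
    rw [smul_smul]
    have he : ‖w‖ / (‖w‖ / g w * ‖w‖) * (‖w‖ / g w) = 1 := by field_simp
    rw [he, one_smul]
  -- the maps Φ and Ψ
  set Φ : Spc N → Spc N := fun x => f (x - x₀) + x₀ with hΦ_def
  set Ψ : Spc N → Spc N := fun y => finv (y - x₀) + x₀ with hΨ_def
  have hleft : Function.LeftInverse Ψ Φ := by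
    intro x
    simp only [hΦ_def, hΨ_def, add_sub_cancel_right]
    rw [hinv1, sub_add_cancel]
  have hright : Function.RightInverse Ψ Φ := by
    intro y
    simp only [hΦ_def, hΨ_def, add_sub_cancel_right]
    rw [hinv2, sub_add_cancel]
  have hΦx₀ : Φ x₀ = x₀ := by
    simp only [hΦ_def, sub_self, hf0, zero_add]
  -- constants
  have hDd0 : 0 ≤ D / d := div_nonneg hD.le hd.le
  have hMpos : 0 < D * (2 + D / d) := mul_pos hD (by nlinarith)
  have hLpos : 0 < 2 / d := by positivity
  -- Lipschitz estimates
  have hΦlipR : ∀ x y : Spc N, dist (Φ x) (Φ y) ≤ (2 / d) * dist x y := by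
    intro x y
    simp only [hΦ_def]
    rw [dist_eq_norm, dist_eq_norm,
      show f (x - x₀) + x₀ - (f (y - x₀) + x₀) = f (x - x₀) - f (y - x₀) by abel,
      show x - y = (x - x₀) - (y - x₀) by abel]
    simpa only [hf_def] using radial_lip hd hgnn hub hliplem (x - x₀) (y - x₀)
  have hΨlipR : ∀ x y : Spc N, dist (Ψ x) (Ψ y) ≤ (D * (2 + D / d)) * dist x y := by
    intro x y
    simp only [hΨ_def]
    rw [dist_eq_norm, dist_eq_norm,
      show finv (x - x₀) + x₀ - (finv (y - x₀) + x₀) = finv (x - x₀) - finv (y - x₀) by abel,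
      show x - y = (x - x₀) - (y - x₀) by abel]
    simpa only [hfinv_def] using radial_inv_lip hd hD hgnn hlb hliplem (x - x₀) (y - x₀)
  have hΦlip : LipschitzWith (Real.toNNReal (2 / d)) Φ := by
    apply LipschitzWith.of_dist_le_mul
    intro x y
    rw [Real.coe_toNNReal _ hLpos.le]
    exact hΦlipR x y
  have hΨlip : LipschitzWith (Real.toNNReal (D * (2 + D / d))) Ψ := by
    apply LipschitzWith.of_dist_le_mul
    intro x y
    rw [Real.coe_toNNReal _ hMpos.le]
    exact hΨlipR x y
  -- image property
  have himage : ∀ r : ℝ, 0 < r → Φ '' ((fun x => r • (x - x₀) + x₀) '' K) = ball x₀ r := by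
    intro r hr
    ext y
    constructor
    · rintro ⟨-, ⟨x, hxK, rfl⟩, rfl⟩
      simp only [hΦ_def, add_sub_cancel_right]
      rw [mem_ball, dist_eq_norm, add_sub_cancel_right, hnf, hsmul r hr.le]
      have hmem : g (x - x₀) < 1 := by
        rw [← hmem_iff]
        rw [hCmem, sub_add_cancel]
        exact hxK
      calc r * g (x - x₀) < r * 1 := mul_lt_mul_of_pos_left hmem hr
        _ = r := mul_one r
    · intro hy
      rw [mem_ball, dist_eq_norm] at hy
      refine ⟨r • ((r⁻¹ • finv (y - x₀) + x₀) - x₀) + x₀, ⟨r⁻¹ • finv (y - x₀) + x₀, ?_, rfl⟩, ?_⟩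
      · rw [← hCmem, hmem_iff, hsmul _ (inv_nonneg.2 hr.le), hgfinv]
        have h2 : r⁻¹ * ‖y - x₀‖ < r⁻¹ * r := mul_lt_mul_of_pos_left hy (inv_pos.2 hr)
        rwa [inv_mul_cancel₀ hr.ne'] at h2
      · simp only [hΦ_def, add_sub_cancel_right]
        rw [smul_inv_smul₀ hr.ne', hinv2, sub_add_cancel]
  -- anti-Lipschitz estimates
  have hΦanti : ∀ p q : Spc N, dist p q ≤ (D * (2 + D / d)) * dist (Φ p) (Φ q) := by
    intro p q
    calc dist p q = dist (Ψ (Φ p)) (Ψ (Φ q)) := by rw [hleft p, hleft q]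
      _ ≤ _ := hΨlipR _ _
  have hΨanti : ∀ p q : Spc N, dist p q ≤ (2 / d) * dist (Ψ p) (Ψ q) := by
    intro p q
    calc dist p q = dist (Φ (Ψ p)) (Φ (Ψ q)) := by rw [hright p, hright q]
      _ ≤ _ := hΦlipR _ _
  refine ⟨Φ, Ψ, hleft, hright, hΦx₀, himage, hΦlip, hΨlip, ?_, ?_⟩
  · filter_upwards [hΦlip.ae_differentiableAt] with x hx
    have hA : HasFDerivAt Φ (fderiv ℝ Φ x) x := hx.hasFDerivAt
    have hop : ‖fderiv ℝ Φ x‖ ≤ 2 / d := by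
      have h1 := norm_fderiv_le_of_lipschitz ℝ hΦlip (x₀ := x)
      rwa [Real.coe_toNNReal _ hLpos.le] at h1
    have hlow := antilip_deriv hA hMpos hΦanti
    exact det_bound _ hLpos.le hMpos hop hlow
  · filter_upwards [hΨlip.ae_differentiableAt] with x hx
    have hA : HasFDerivAt Ψ (fderiv ℝ Ψ x) x := hx.hasFDerivAt
    have hop : ‖fderiv ℝ Ψ x‖ ≤ D * (2 + D / d) := by
      have h1 := norm_fderiv_le_of_lipschitz ℝ hΨlip (x₀ := x)
      rwa [Real.coe_toNNReal _ hMpos.le] at h1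
    have hlow := antilip_deriv hA hLpos hΨanti
    exact det_bound _ hMpos.le hLpos hop hlow
end
end
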